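/- For masked softmax: given logits z ∈ R^T, a binary attention mask a ∈ {0,1}^T with at least one nonzero entry, define softmax(z; a)_j = a_j exp(z_j) / Σ_k a_k exp(z_k). Then for any perturbation ε ∈ R^T with ‖ε‖_∞ ≤ ε_max and any matrix X ∈ R^{T×d} with entries bounded by α, ‖softmax(z;a)^T X − softmax(z+ε;a)^T X‖_2 ≤ √d · α · (exp(2 ε_max) − 1). -/
import Mathlib

open scoped BigOperators

noncomputable def eNorm {d : ℕ} (v : Fin d → ℝ) : ℝ := Real.sqrt (∑ i, v i ^ 2)

theorem stmt3 (T d : ℕ) (α εmax : ℝ) (hα : 0 ≤ α) (hεmax : 0 ≤ εmax)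
    (a : Fin T → ℝ) (ha : ∀ j, a j = 0 ∨ a j = 1) (ha1 : 1 ≤ ∑ j, a j)
    (z ε : Fin T → ℝ) (hε : ∀ j, |ε j| ≤ εmax)
    (X : Matrix (Fin T) (Fin d) ℝ) (hX : ∀ k j, |X k j| ≤ α) :
    eNorm (fun j =>
        (∑ k, (a k * Real.exp (z k) / ∑ l, a l * Real.exp (z l)) * X k j)
          - ∑ k, (a k * Real.exp (z k + ε k) / ∑ l, a l * Real.exp (z l + ε l)) * X k j)
      ≤ Real.sqrt d * α * (Real.exp (2 * εmax) - 1) := by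
  have hE1 : 1 ≤ Real.exp (2 * εmax) := Real.one_le_exp (by linarith)
  have hexp : 0 ≤ Real.exp (2 * εmax) - 1 := by linarith
  have ha0 : ∀ j, 0 ≤ a j := fun j => by rcases ha j with h|h <;> simp [h]
  obtain ⟨j0, hj0⟩ : ∃ j, a j = 1 := by
    by_contra h
    push_neg at h
    have hz : ∀ j, a j = 0 := fun j => (ha j).resolve_right (h j)
    simp [hz] at ha1
    linarith
  set S := ∑ l, a l * Real.exp (z l) with hS
  set S' := ∑ l, a l * Real.exp (z l + ε l) with hS'
  have hterm : ∀ l, (0:ℝ) ≤ a l * Real.exp (z l) :=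
    fun l => mul_nonneg (ha0 l) (Real.exp_pos _).le
  have hterm' : ∀ l, (0:ℝ) ≤ a l * Real.exp (z l + ε l) :=
    fun l => mul_nonneg (ha0 l) (Real.exp_pos _).le
  have hSpos : 0 < S := by
    have h1 : a j0 * Real.exp (z j0) ≤ S :=
      Finset.single_le_sum (fun l _ => hterm l) (Finset.mem_univ j0)
    rw [hj0, one_mul] at h1
    linarith [Real.exp_pos (z j0)]
  have hS'pos : 0 < S' := by
    have h1 : a j0 * Real.exp (z j0 + ε j0) ≤ S' :=
      Finset.single_le_sum (fun l _ => hterm' l) (Finset.mem_univ j0)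
    rw [hj0, one_mul] at h1
    linarith [Real.exp_pos (z j0 + ε j0)]
  have hel : ∀ l, Real.exp (-εmax) ≤ Real.exp (ε l) ∧ Real.exp (ε l) ≤ Real.exp εmax := by
    intro l
    have := abs_le.mp (hε l)
    exact ⟨Real.exp_le_exp.mpr (by linarith [this.1]), Real.exp_le_exp.mpr this.2⟩
  have hee : Real.exp εmax * Real.exp (-εmax) = 1 := by
    rw [← Real.exp_add, add_neg_cancel, Real.exp_zero]
  have hS'le : S' ≤ Real.exp εmax * S := by
    rw [hS, hS', Finset.mul_sum]
    apply Finset.sum_le_sum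
    intro l _
    rw [Real.exp_add]
    calc a l * (Real.exp (z l) * Real.exp (ε l))
        = (a l * Real.exp (z l)) * Real.exp (ε l) := by ring
      _ ≤ (a l * Real.exp (z l)) * Real.exp εmax :=
          mul_le_mul_of_nonneg_left (hel l).2 (hterm l)
      _ = Real.exp εmax * (a l * Real.exp (z l)) := by ring
  have hS'ge : Real.exp (-εmax) * S ≤ S' := by
    rw [hS, hS', Finset.mul_sum]
    apply Finset.sum_le_sum
    intro l _
    rw [Real.exp_add]
    calc Real.exp (-εmax) * (a l * Real.exp (z l))
        = (a l * Real.exp (z l)) * Real.exp (-εmax) := by ring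
      _ ≤ (a l * Real.exp (z l)) * Real.exp (ε l) :=
          mul_le_mul_of_nonneg_left (hel l).1 (hterm l)
      _ = a l * (Real.exp (z l) * Real.exp (ε l)) := by ring
  have hE2 : Real.exp εmax / Real.exp (-εmax) = Real.exp (2 * εmax) := by
    rw [← Real.exp_sub]; ring_nf
  have hkey : ∀ k, |a k * Real.exp (z k) / S - a k * Real.exp (z k + ε k) / S'|
      ≤ (Real.exp (2 * εmax) - 1) * (a k * Real.exp (z k) / S) := by
    intro k
    set pk := a k * Real.exp (z k) / S with hpk_def
    set qk := a k * Real.exp (z k + ε k) / S' with hqk_def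
    have hpk : 0 ≤ pk := div_nonneg (hterm k) hSpos.le
    have hqk : 0 ≤ qk := div_nonneg (hterm' k) hS'pos.le
    have hdenpos : 0 < Real.exp (-εmax) * S := mul_pos (Real.exp_pos _) hSpos
    have hdenpos' : 0 < Real.exp (-εmax) * S' := mul_pos (Real.exp_pos _) hS'pos
    have h1 : qk ≤ Real.exp (2 * εmax) * pk := by
      have hnum : a k * Real.exp (z k + ε k) ≤ Real.exp εmax * (a k * Real.exp (z k)) := by
        rw [Real.exp_add]
        calc a k * (Real.exp (z k) * Real.exp (ε k))
            = (a k * Real.exp (z k)) * Real.exp (ε k) := by ring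
          _ ≤ (a k * Real.exp (z k)) * Real.exp εmax :=
              mul_le_mul_of_nonneg_left (hel k).2 (hterm k)
          _ = Real.exp εmax * (a k * Real.exp (z k)) := by ring
      have := div_le_div₀ (mul_nonneg (Real.exp_pos εmax).le (hterm k)) hnum hdenpos hS'ge
      calc qk ≤ Real.exp εmax * (a k * Real.exp (z k)) / (Real.exp (-εmax) * S) := this
        _ = (Real.exp εmax / Real.exp (-εmax)) * pk := by
            rw [hpk_def]; field_simp
        _ = Real.exp (2 * εmax) * pk := by rw [hE2]
    have h2 : pk ≤ Real.exp (2 * εmax) * qk := by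
      have hnum : a k * Real.exp (z k) ≤ Real.exp εmax * (a k * Real.exp (z k + ε k)) := by
        rw [Real.exp_add]
        have h0 : (Real.exp εmax * (a k * Real.exp (z k))) * Real.exp (-εmax)
            = a k * Real.exp (z k) := by
          rw [mul_comm (Real.exp εmax), mul_assoc, hee, mul_one]
        calc a k * Real.exp (z k)
            = (Real.exp εmax * (a k * Real.exp (z k))) * Real.exp (-εmax) := h0.symm
          _ ≤ (Real.exp εmax * (a k * Real.exp (z k))) * Real.exp (ε k) :=
              mul_le_mul_of_nonneg_left (hel k).1
                (mul_nonneg (Real.exp_pos εmax).le (hterm k))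
          _ = Real.exp εmax * (a k * (Real.exp (z k) * Real.exp (ε k))) := by ring
      have hSge' : Real.exp (-εmax) * S' ≤ S := by
        have h1 := mul_le_mul_of_nonneg_left hS'le (Real.exp_pos (-εmax)).le
        have h0 : Real.exp (-εmax) * (Real.exp εmax * S) = S := by
          rw [← mul_assoc, mul_comm (Real.exp (-εmax)), hee, one_mul]
        linarith
      have := div_le_div₀ (mul_nonneg (Real.exp_pos εmax).le (hterm' k)) hnum hdenpos' hSge'
      calc pk ≤ Real.exp εmax * (a k * Real.exp (z k + ε k)) / (Real.exp (-εmax) * S') := this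
        _ = (Real.exp εmax / Real.exp (-εmax)) * qk := by
            rw [hqk_def]; field_simp
        _ = Real.exp (2 * εmax) * qk := by rw [hE2]
    rw [abs_le]
    constructor
    · linarith
    · nlinarith [h2, hpk, hqk, hE1, sq_nonneg (Real.exp (2 * εmax) - 1)]
  have hsum1 : ∑ k, a k * Real.exp (z k) / S = 1 := by
    rw [← Finset.sum_div, ← hS, div_self hSpos.ne']
  have hcoord : ∀ j, |(∑ k, (a k * Real.exp (z k) / S) * X k j)
      - ∑ k, (a k * Real.exp (z k + ε k) / S') * X k j| ≤ α * (Real.exp (2 * εmax) - 1) := by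
    intro j
    rw [← Finset.sum_sub_distrib]
    calc |∑ k, ((a k * Real.exp (z k) / S) * X k j
            - (a k * Real.exp (z k + ε k) / S') * X k j)|
        ≤ ∑ k, |(a k * Real.exp (z k) / S) * X k j
            - (a k * Real.exp (z k + ε k) / S') * X k j| :=
          Finset.abs_sum_le_sum_abs _ _
      _ ≤ ∑ k, (Real.exp (2 * εmax) - 1) * (a k * Real.exp (z k) / S) * α := by
          apply Finset.sum_le_sum
          intro k _
          rw [← sub_mul, abs_mul]
          exact mul_le_mul (hkey k) (hX k j) (abs_nonneg _)
            (mul_nonneg hexp (div_nonneg (hterm k) hSpos.le))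
      _ = α * (Real.exp (2 * εmax) - 1) := by
          rw [← Finset.sum_mul, ← Finset.mul_sum, hsum1]; ring
  simp only [eNorm]
  have hC : 0 ≤ α * (Real.exp (2 * εmax) - 1) := mul_nonneg hα hexp
  calc Real.sqrt (∑ i, ((∑ k, (a k * Real.exp (z k) / S) * X k i)
          - ∑ k, (a k * Real.exp (z k + ε k) / S') * X k i) ^ 2)
      ≤ Real.sqrt (∑ _i : Fin d, (α * (Real.exp (2 * εmax) - 1)) ^ 2) := by
        apply Real.sqrt_le_sqrt
        apply Finset.sum_le_sum
        intro i _
        have := abs_le.mp (hcoord i)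
        exact sq_le_sq' (by linarith [this.1]) this.2
    _ = Real.sqrt (d * (α * (Real.exp (2 * εmax) - 1)) ^ 2) := by
        rw [Finset.sum_const, Finset.card_univ, Fintype.card_fin, nsmul_eq_mul]
    _ = Real.sqrt d * (α * (Real.exp (2 * εmax) - 1)) := by
        rw [Real.sqrt_mul (Nat.cast_nonneg d), Real.sqrt_sq hC]
    _ = Real.sqrt d * α * (Real.exp (2 * εmax) - 1) := by ring
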